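/- If a rewrite relation R is locally confluent and terminating, then asymmetric atomic deduction modulo R has the cut elimination property: every provable sequent has a cut-free proof. -/
import Mathlib


open Relation

/--
Asymmetric atomic deduction modulo a rewrite relation `R` on atomic propositions `α`.
Sequents are pairs of finite multisets of atomic propositions; `→*` is the
reflexive-transitive closure `Relation.ReflTransGen R` of `R`.
The Boolean index records whether the Cut rule is allowed:
`AsymDed R true Γ Δ` is provability in the full system, `AsymDed R false Γ Δ`
is provability by a cut-free proof.
-/
inductive AsymDed (R : α → α → Prop) : Bool → Multiset α → Multiset α → Prop
  | ax {b : Bool} (Γ Δ : Multiset α) (A₁ A₂ C : α)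
      (h₁ : ReflTransGen R A₁ C) (h₂ : ReflTransGen R A₂ C) :
      AsymDed R b (A₁ ::ₘ Γ) (A₂ ::ₘ Δ)
  | cut (Γ Δ : Multiset α) (C C₁ C₂ : α)
      (h₁ : ReflTransGen R C C₁) (h₂ : ReflTransGen R C C₂)
      (p₁ : AsymDed R true Γ (C₁ ::ₘ Δ)) (p₂ : AsymDed R true (C₂ ::ₘ Γ) Δ) :
      AsymDed R true Γ Δ
  | contrL {b : Bool} (Γ Δ : Multiset α) (A A₁ A₂ : α)
      (h₁ : ReflTransGen R A A₁) (h₂ : ReflTransGen R A A₂)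
      (p : AsymDed R b (A₁ ::ₘ A₂ ::ₘ Γ) Δ) :
      AsymDed R b (A ::ₘ Γ) Δ
  | contrR {b : Bool} (Γ Δ : Multiset α) (A A₁ A₂ : α)
      (h₁ : ReflTransGen R A A₁) (h₂ : ReflTransGen R A A₂)
      (p : AsymDed R b Γ (A₁ ::ₘ A₂ ::ₘ Δ)) :
      AsymDed R b Γ (A ::ₘ Δ)
  | weakL {b : Bool} (Γ Δ : Multiset α) (A : α)
      (p : AsymDed R b Γ Δ) :
      AsymDed R b (A ::ₘ Γ) Δ
  | weakR {b : Bool} (Γ Δ : Multiset α) (A : α)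
      (p : AsymDed R b Γ Δ) :
      AsymDed R b Γ (A ::ₘ Δ)

/-- `R` is locally confluent: one-step reducts of a common element have a common reduct. -/
def LocallyConfluent {α : Type*} (R : α → α → Prop) : Prop :=
  ∀ A B C : α, R A B → R A C →
    ∃ D, Relation.ReflTransGen R B D ∧ Relation.ReflTransGen R C D

/-- `R` is terminating: the converse relation of `R` is well-founded
(there is no infinite reduction sequence). -/
def Terminating {α : Type*} (R : α → α → Prop) : Prop :=
  WellFounded (fun a b : α => R b a)

/-- Newman's lemma: locally confluent + terminating implies confluent. -/
theorem newman {α : Type*} {R : α → α → Prop} (hlc : LocallyConfluent R)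
    (hterm : Terminating R) :
    ∀ a b c : α, ReflTransGen R a b → ReflTransGen R a c →
      ∃ d, ReflTransGen R b d ∧ ReflTransGen R c d := by
  intro a
  induction a using hterm.induction with
  | _ a ih =>
    intro b c hab hac
    rcases (ReflTransGen.cases_head hab) with rfl | ⟨b₁, hab₁, hb₁b⟩
    · exact ⟨c, hac, ReflTransGen.refl⟩
    rcases (ReflTransGen.cases_head hac) with rfl | ⟨c₁, hac₁, hc₁c⟩
    · exact ⟨b, ReflTransGen.refl, hab⟩
    obtain ⟨e, hb₁e, hc₁e⟩ := hlc a b₁ c₁ hab₁ hac₁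
    obtain ⟨f, hbf, hef⟩ := ih b₁ hab₁ b e hb₁b hb₁e
    obtain ⟨d, hfd, hcd⟩ := ih c₁ hac₁ f c (hc₁e.trans hef) hc₁c
    exact ⟨d, hbf.trans hfd, hcd⟩

/-- Semantic characterization, easy direction: a joinable pair yields a cut-free proof. -/
theorem asymDed_of_join {α : Type*} {R : α → α → Prop} {Γ Δ : Multiset α}
    {A B C : α} (hA : A ∈ Γ) (hB : B ∈ Δ)
    (h₁ : ReflTransGen R A C) (h₂ : ReflTransGen R B C) :
    AsymDed R false Γ Δ := by
  obtain ⟨Γ', rfl⟩ := Multiset.exists_cons_of_mem hA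
  obtain ⟨Δ', rfl⟩ := Multiset.exists_cons_of_mem hB
  exact AsymDed.ax Γ' Δ' A B C h₁ h₂

/-- Semantic characterization, hard direction: any proof yields a joinable pair,
assuming confluence. -/
theorem join_of_asymDed {α : Type*} {R : α → α → Prop}
    (hconf : ∀ a b c : α, ReflTransGen R a b → ReflTransGen R a c →
      ∃ d, ReflTransGen R b d ∧ ReflTransGen R c d)
    {b : Bool} {Γ Δ : Multiset α} (h : AsymDed R b Γ Δ) :
    ∃ A ∈ Γ, ∃ B ∈ Δ, ∃ C, ReflTransGen R A C ∧ ReflTransGen R B C := by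
  induction h with
  | ax Γ Δ A₁ A₂ C h₁ h₂ =>
    exact ⟨A₁, Multiset.mem_cons_self _ _, A₂, Multiset.mem_cons_self _ _, C, h₁, h₂⟩
  | cut Γ Δ C C₁ C₂ h₁ h₂ p₁ p₂ ih₁ ih₂ =>
    obtain ⟨A, hA, B, hB, D, hAD, hBD⟩ := ih₁
    rcases Multiset.mem_cons.mp hB with rfl | hB
    · obtain ⟨A', hA', B', hB', E, hAE, hBE⟩ := ih₂
      rcases Multiset.mem_cons.mp hA' with rfl | hA'
      · -- A joins C₁ at D, C→*C₁, C→*C₂, C₂ joins B' at E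
        obtain ⟨F, hDF, hC₂F⟩ := hconf C D A' (h₁.trans hBD) h₂
        obtain ⟨G, hFG, hEG⟩ := hconf A' F E hC₂F hAE
        exact ⟨A, hA, B', hB', G, hAD.trans (hDF.trans hFG), hBE.trans hEG⟩
      · exact ⟨A', hA', B', hB', E, hAE, hBE⟩
    · exact ⟨A, hA, B, hB, D, hAD, hBD⟩
  | contrL Γ Δ A A₁ A₂ h₁ h₂ p ih =>
    obtain ⟨A', hA', B, hB, D, hAD, hBD⟩ := ih
    rcases Multiset.mem_cons.mp hA' with rfl | hA'
    · exact ⟨A, Multiset.mem_cons_self _ _, B, hB, D, h₁.trans hAD, hBD⟩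
    rcases Multiset.mem_cons.mp hA' with rfl | hA'
    · exact ⟨A, Multiset.mem_cons_self _ _, B, hB, D, h₂.trans hAD, hBD⟩
    · exact ⟨A', Multiset.mem_cons_of_mem hA', B, hB, D, hAD, hBD⟩
  | contrR Γ Δ A A₁ A₂ h₁ h₂ p ih =>
    obtain ⟨A', hA', B, hB, D, hAD, hBD⟩ := ih
    rcases Multiset.mem_cons.mp hB with rfl | hB
    · exact ⟨A', hA', A, Multiset.mem_cons_self _ _, D, hAD, h₁.trans hBD⟩
    rcases Multiset.mem_cons.mp hB with rfl | hB
    · exact ⟨A', hA', A, Multiset.mem_cons_self _ _, D, hAD, h₂.trans hBD⟩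
    · exact ⟨A', hA', B, Multiset.mem_cons_of_mem hB, D, hAD, hBD⟩
  | weakL Γ Δ A p ih =>
    obtain ⟨A', hA', B, hB, D, hAD, hBD⟩ := ih
    exact ⟨A', Multiset.mem_cons_of_mem hA', B, hB, D, hAD, hBD⟩
  | weakR Γ Δ A p ih =>
    obtain ⟨A', hA', B, hB, D, hAD, hBD⟩ := ih
    exact ⟨A', hA', B, Multiset.mem_cons_of_mem hB, D, hAD, hBD⟩

/--
If the rewrite relation `R` is locally confluent and terminating, then
asymmetric atomic deduction modulo `R` has the cut elimination property:
every provable sequent has a cut-free proof.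
-/
theorem asymDed_cut_elimination_of_locallyConfluent_terminating {α : Type*}
    (R : α → α → Prop) (hlc : LocallyConfluent R) (hterm : Terminating R)
    (Γ Δ : Multiset α) (h : AsymDed R true Γ Δ) : AsymDed R false Γ Δ := by
  obtain ⟨A, hA, B, hB, C, h₁, h₂⟩ := join_of_asymDed (newman hlc hterm) h
  exact asymDed_of_join hA hB h₁ h₂
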